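/- Let a = i s, b = i t ∈ iℝ and z, w ∈ ℂⁿ, and define the torsion map T((z,a),(w,b)) = ((q − t₀ − (n+1)/n)(bz − aw), (Re(q) − 1)(conj(w)ᵗz − conj(z)ᵗw)) arising from α = Re(q)(α₁−γ₁)+Im(q)(α_i+γ_i)+t₀β₁ via T(x,y) = α(x,y) − α(y,x) − [x,y]_m. Then T vanishes identically if and only if q = 1 and t₀ = −1/n. -/

import Mathlib

abbrev mSpace (n : ℕ) := (Fin n → ℂ) × ℂ

/-- The torsion map
`T((z,a),(w,b)) = ((q − t₀ − (n+1)/n)(bz − aw), (Re(q) − 1)(conj(w)ᵗz − conj(z)ᵗw))`. -/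
noncomputable def torsionMap (n : ℕ) (q : ℂ) (t₀ : ℝ) (x y : mSpace n) : mSpace n :=
  ((q - (t₀ : ℂ) - ((n : ℂ) + 1) / (n : ℂ)) • (y.2 • x.1 - x.2 • y.1),
    (q.re - 1 : ℂ) *
      ((∑ l, (starRingEnd ℂ) (y.1 l) * x.1 l) - ∑ l, (starRingEnd ℂ) (x.1 l) * y.1 l))

/-- The torsion `T` vanishes identically on `m` if and only if `q = 1` and `t₀ = −1/n`. -/
theorem torsion_vanishes_iff (n : ℕ) (hn : 1 ≤ n) (q : ℂ) (t₀ : ℝ) :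
    (∀ x y : mSpace n, x.2.re = 0 → y.2.re = 0 → torsionMap n q t₀ x y = 0)
      ↔ (q = 1 ∧ t₀ = -(n : ℝ)⁻¹) := by
  have hn0 : (n : ℝ) ≠ 0 := by positivity
  have hn0c : (n : ℂ) ≠ 0 := by exact_mod_cast Nat.cast_ne_zero.mpr (by omega)
  constructor
  · intro h
    -- first test point: get coefficient c = 0
    have h1 := h ((fun _ => 1), 0) ((fun _ => 0), Complex.I) (by simp) (by simp)
    have hc : q - (t₀ : ℂ) - ((n : ℂ) + 1) / (n : ℂ) = 0 := by
      have := congrFun (congrArg Prod.fst h1) ⟨0, by omega⟩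
      simp [torsionMap, Complex.ext_iff] at this
      simpa [Complex.ext_iff] using this
    -- second test point: get q.re = 1
    have h2 := h ((fun _ => 1), 0) ((fun _ => Complex.I), 0) (by simp) (by simp)
    have hre : q.re = 1 := by
      have := congrArg Prod.snd h2
      simp [torsionMap, Finset.sum_const, Complex.ext_iff] at this
      rcases this with h' | h'
      · linarith
      · exfalso
        have hpos : (0:ℝ) < n := by positivity
        linarith
    have him : q.im = 0 := by
      have := congrArg Complex.im hc
      simpa [Complex.div_im, Complex.ofReal_im] using this
    have hq : q = 1 := by
      apply Complex.ext <;> simp [hre, him]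
    refine ⟨hq, ?_⟩
    have := congrArg Complex.re hc
    rw [hq] at this
    simp [Complex.div_re, Complex.normSq, Complex.ofReal_re] at this
    field_simp at this ⊢
    have key : (t₀ * (n:ℝ) + 1) * (n:ℝ) = 0 := by linear_combination (-(n:ℝ)) * this
    rcases mul_eq_zero.mp key with h' | h'
    · linarith
    · exact absurd h' hn0
  · rintro ⟨hq, ht⟩ x y hx hy
    have hc : q - (t₀ : ℂ) - ((n : ℂ) + 1) / (n : ℂ) = 0 := by
      rw [hq, ht]
      push_cast
      field_simp
      ring
    have hre' : ((q.re : ℂ) - 1) = 0 := by rw [hq]; norm_num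
    simp [torsionMap, hc, hre']
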